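/- Let G ≥ 1 and N ≥ 1 be integers. Then the set of rational numbers { T_G(n,k) : 1 ≤ n ≤ N, 1 ≤ k ≤ G·(G+1)^(n−1) }, where T_G(n,k) = (k + ⌊(k−1)/G⌋)/(G+1)^n, is equal to the set { j/(G+1)^N : j an integer, 1 ≤ j ≤ (G+1)^N − 1 }. In particular, together with the endpoints 0 and 1, the topological orders of the points of the N-th intermediate curve C^(N) form an equally spaced grid in [0,1], and the difference of topological order between adjacent points of C^(N) is exactly 1/(G+1)^N = T_G(N,1). -/

import Mathlib

/-- Auxiliary: every grid point index `j` arises from some `(n,k)`. -/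
lemma topOrders_aux (G : ℕ) (hG : 1 ≤ G) :
    ∀ N j : ℕ, 1 ≤ j → j ≤ (G + 1) ^ N - 1 →
      ∃ n k : ℕ, 1 ≤ n ∧ n ≤ N ∧ 1 ≤ k ∧ k ≤ G * (G + 1) ^ (n - 1) ∧
        (k + (k - 1) / G) * (G + 1) ^ (N - n) = j := by
  intro N
  induction N with
  | zero => intro j hj1 hj2; simp at hj2; omega
  | succ N ih =>
    intro j hj1 hj2
    have hpow : 1 ≤ (G + 1) ^ N := Nat.one_le_pow _ _ (by omega)
    have hpowsucc : (G + 1) ^ (N + 1) = (G + 1) * (G + 1) ^ N := by ring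
    by_cases hdvd : (G + 1) ∣ j
    · obtain ⟨j', rfl⟩ := hdvd
      have hj'1 : 1 ≤ j' := by
        rcases Nat.eq_zero_or_pos j' with h | h
        · subst h; simp at hj1
        · exact h
      have hlt : (G + 1) * j' < (G + 1) * (G + 1) ^ N := by omega
      have hj'2 : j' ≤ (G + 1) ^ N - 1 := by
        have := Nat.lt_of_mul_lt_mul_left hlt
        omega
      obtain ⟨n, k, hn1, hnN, hk1, hkG, hval⟩ := ih j' hj'1 hj'2
      refine ⟨n, k, hn1, by omega, hk1, hkG, ?_⟩
      have hsub : N + 1 - n = (N - n) + 1 := by omega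
      rw [hsub, pow_succ, ← mul_assoc, hval]
      ring
    · obtain ⟨s, r, hrlt, hmod⟩ : ∃ s r : ℕ, r < G + 1 ∧ j = (G + 1) * s + r :=
        ⟨j / (G + 1), j % (G + 1), Nat.mod_lt _ (by omega),
          (Nat.div_add_mod j (G + 1)).symm⟩
      have hr1 : 1 ≤ r := by
        rcases Nat.eq_zero_or_pos r with h | h
        · exact absurd ⟨s, by omega⟩ hdvd
        · exact h
      have hslt : s < (G + 1) ^ N := by
        have h1 : (G + 1) * s < (G + 1) * (G + 1) ^ N := by omega
        exact Nat.lt_of_mul_lt_mul_left h1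
      refine ⟨N + 1, G * s + r, by omega, le_refl _, by omega, ?_, ?_⟩
      · simp only [Nat.add_sub_cancel]
        have h2 : G * (s + 1) ≤ G * (G + 1) ^ N := Nat.mul_le_mul_left _ (by omega)
        have h3 : G * (s + 1) = G * s + G := by ring
        omega
      · have hdiv : (G * s + r - 1) / G = s := by
          have h1 : G * s + r - 1 = G * s + (r - 1) := by omega
          rw [h1, Nat.mul_add_div (by omega), Nat.div_eq_of_lt (by omega)]
          omega
        simp only [Nat.sub_self, pow_zero, mul_one, hdiv]
        have h4 : (G + 1) * s = G * s + s := by ring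
        omega

/-- The topological orders `T_G(n,k) = (k + ⌊(k−1)/G⌋)/(G+1)^n` of the points
inserted during the first `N` iterations of the fractal construction are
exactly the grid points `j/(G+1)^N` for `1 ≤ j ≤ (G+1)^N − 1`; hence together
with the endpoints `0` and `1` the points of the intermediate curve `C^(N)`
form an equally spaced grid in `[0,1]` with spacing `1/(G+1)^N = T_G(N,1)`. -/
theorem topOrders_eq_grid (G N : ℕ) (hG : 1 ≤ G) (hN : 1 ≤ N) :
    {q : ℚ | ∃ n k : ℕ, 1 ≤ n ∧ n ≤ N ∧ 1 ≤ k ∧ k ≤ G * (G + 1) ^ (n - 1) ∧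
        q = ((k + (k - 1) / G : ℕ) : ℚ) / ((G : ℚ) + 1) ^ n} =
      {q : ℚ | ∃ j : ℕ, 1 ≤ j ∧ j ≤ (G + 1) ^ N - 1 ∧
        q = (j : ℚ) / ((G : ℚ) + 1) ^ N} := by
  ext q
  simp only [Set.mem_setOf_eq]
  constructor
  · rintro ⟨n, k, hn1, hnN, hk1, hkG, rfl⟩
    refine ⟨(k + (k - 1) / G) * (G + 1) ^ (N - n), ?_, ?_, ?_⟩
    · have h1 : 1 ≤ (G + 1) ^ (N - n) := Nat.one_le_pow _ _ (by omega)
      have hm1 : 1 ≤ k + (k - 1) / G := le_trans hk1 (Nat.le_add_right _ _)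
      calc 1 = 1 * 1 := by ring
        _ ≤ (k + (k - 1) / G) * (G + 1) ^ (N - n) := Nat.mul_le_mul hm1 h1
    · have hdivlt : (k - 1) / G < (G + 1) ^ (n - 1) := by
        rw [Nat.div_lt_iff_lt_mul (by omega : 0 < G)]
        have h1 : (G + 1) ^ (n - 1) * G = G * (G + 1) ^ (n - 1) := by ring
        omega
      have hpow1 : (G + 1) ^ n = (G + 1) ^ (n - 1) * (G + 1) := by
        rw [← pow_succ]; congr 1; omega
      have hpow2 : (G + 1) ^ (n - 1) * (G + 1) =
          G * (G + 1) ^ (n - 1) + (G + 1) ^ (n - 1) := by ring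
      have hmn : k + (k - 1) / G ≤ (G + 1) ^ n - 1 := by
        rw [hpow1, hpow2]; omega
      have hsplit : (G + 1) ^ n * (G + 1) ^ (N - n) = (G + 1) ^ N := by
        rw [← pow_add]; congr 1; omega
      have hp1 : 1 ≤ (G + 1) ^ (N - n) := Nat.one_le_pow _ _ (by omega)
      calc (k + (k - 1) / G) * (G + 1) ^ (N - n)
          ≤ ((G + 1) ^ n - 1) * (G + 1) ^ (N - n) := Nat.mul_le_mul_right _ hmn
        _ = (G + 1) ^ n * (G + 1) ^ (N - n) - (G + 1) ^ (N - n) := by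
            rw [Nat.sub_mul, one_mul]
        _ ≤ (G + 1) ^ N - 1 := by rw [hsplit]; omega
    · have hNn : n + (N - n) = N := by omega
      rw [← hNn, pow_add]
      push_cast
      have h1 : ((G : ℚ) + 1) ^ n ≠ 0 := by positivity
      have h2 : ((G : ℚ) + 1) ^ (N - n) ≠ 0 := by positivity
      field_simp
      ring_nf; rw [Nat.add_sub_cancel]
  · rintro ⟨j, hj1, hj2, rfl⟩
    obtain ⟨n, k, hn1, hnN, hk1, hkG, hval⟩ := topOrders_aux G hG N j hj1 hj2
    refine ⟨n, k, hn1, hnN, hk1, hkG, ?_⟩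
    have hNn : n + (N - n) = N := by omega
    rw [← hval, ← hNn, pow_add]
    push_cast
    have h1 : ((G : ℚ) + 1) ^ n ≠ 0 := by positivity
    have h2 : ((G : ℚ) + 1) ^ (N - n) ≠ 0 := by positivity
    field_simp
    ring_nf; rw [Nat.add_sub_cancel_left]
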